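/- Transport formula for the model of Figure 4(d) (equation 25): Suppose (i) for every x, y, z, s with μ_x({Z = z} ∩ {S = s}) > 0, μ_x({Y = y} | {Z = z} ∩ {S = s}) = μ_x({Y = y} | {Z = z}) (S-admissibility of Z); (ii) there is a probability measure μ on 𝒵 × 𝒲 × 𝒮 (the source observational distribution augmented with the selection variable) such that μ_x({Z = z} | {W = w} ∩ {S = s}) = μ({Z = z} | {W = w} ∩ {S = s}) for all x, z, w, s (the consequence of the condition (X ⫫ Z | W, S) in the graph with arrows into X(W) deleted); and (iii) for every x, w, s, μ_x({W = w} | {S = s}) = μ_x({W = w}) (W is independent of S under μ_x, i.e., the empty set is S-admissible for the effect of X on W). Then for every x and y, μ_x({Y = y} | {S = s*}) = Σ_{z : 𝒵} μ_x({Y = y} | {Z = z}) · Σ_{w : 𝒲} μ_x({W = w}) · μ({Z = z} | {W = w} ∩ {S = s*}). -/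

import Mathlib

open MeasureTheory

/-- Conditional probability: `μ(A | B) = μ(A ∩ B) / μ(B)`. -/
noncomputable def pcond {Ω : Type*} [MeasurableSpace Ω] (μ : Measure Ω) (A B : Set Ω) :
    ENNReal := μ (A ∩ B) / μ B

private lemma ennreal_cancel {a b c : ENNReal} (hb0 : b ≠ 0) (hbt : b ≠ ⊤) :
    b / a * (c / b) = c / a := by
  rw [div_eq_mul_inv, div_eq_mul_inv, div_eq_mul_inv,
    show b * a⁻¹ * (c * b⁻¹) = b * b⁻¹ * (c * a⁻¹) by ring,
    ENNReal.mul_inv_cancel hb0 hbt, one_mul]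

private lemma measure_partition {Ω β : Type*} [MeasurableSpace Ω] [Fintype β]
    (ν : Measure Ω) (A : Set Ω) (f : Ω → β)
    (hA : ∀ b, MeasurableSet (A ∩ f ⁻¹' {b})) :
    ν A = ∑ b, ν (A ∩ f ⁻¹' {b}) := by
  have h : A = ⋃ b, A ∩ f ⁻¹' {b} := by ext p; simp
  have hd : Pairwise (Function.onFun Disjoint fun b => A ∩ f ⁻¹' {b}) := by
    intro i j hij
    rw [Function.onFun, Set.disjoint_left]
    rintro p ⟨_, hp⟩ ⟨_, hq⟩
    exact hij (hp.symm.trans hq)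
  conv_lhs => rw [h]
  rw [measure_iUnion hd hA, tsum_fintype]

/-- Transport formula for the model of Figure 4(d), eq. (25):
`P*(y | do(x)) = ∑ z, P(y | do(x), z) · ∑ w, P(w | do(x)) · P*(z | w)`. -/
theorem fig4d_transport_formula
    {𝒳 𝒴 𝒵 𝒲 𝒮 : Type*}
    [Fintype 𝒳] [Fintype 𝒴] [Fintype 𝒵] [Fintype 𝒲] [Fintype 𝒮]
    [Nonempty 𝒳] [Nonempty 𝒴] [Nonempty 𝒵] [Nonempty 𝒲] [Nonempty 𝒮]
    [MeasurableSpace 𝒴] [DiscreteMeasurableSpace 𝒴]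
    [MeasurableSpace 𝒵] [DiscreteMeasurableSpace 𝒵]
    [MeasurableSpace 𝒲] [DiscreteMeasurableSpace 𝒲]
    [MeasurableSpace 𝒮] [DiscreteMeasurableSpace 𝒮]
    -- post-intervention distributions of (Y, Z, W, S) in the source study
    (μx : 𝒳 → Measure (𝒴 × 𝒵 × 𝒲 × 𝒮))
    (hprobx : ∀ x, IsProbabilityMeasure (μx x))
    -- source observational distribution of (Z, W, S)
    (μ : Measure (𝒵 × 𝒲 × 𝒮)) (hprob : IsProbabilityMeasure μ)
    (s' : 𝒮)
    -- positive probability of all conditioning events appearing in the statement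
    (hposS : ∀ x (s : 𝒮), 0 < μx x {p | p.2.2.2 = s})
    (hposZ : ∀ x (z : 𝒵), 0 < μx x {p | p.2.1 = z})
    (hposWSx : ∀ x w s, 0 < μx x ({p | p.2.2.1 = w} ∩ {p | p.2.2.2 = s}))
    (hposWS : ∀ w s, 0 < μ ({q | q.2.1 = w} ∩ {q | q.2.2 = s}))
    -- (i) S-admissibility of Z : (Y ⫫ S | Z) under every μx x
    (hadm : ∀ x y z s, 0 < μx x ({p | p.2.1 = z} ∩ {p | p.2.2.2 = s}) →
      pcond (μx x) {p | p.1 = y} ({p | p.2.1 = z} ∩ {p | p.2.2.2 = s})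
        = pcond (μx x) {p | p.1 = y} {p | p.2.1 = z})
    -- (ii) (X ⫫ Z | W, S) in the graph with arrows into X(W) deleted :
    -- P(z | do(x), w, s) = P(z | w, s)
    (hrule3 : ∀ x z w s,
      pcond (μx x) {p | p.2.1 = z} ({p | p.2.2.1 = w} ∩ {p | p.2.2.2 = s})
        = pcond μ {q | q.1 = z} ({q | q.2.1 = w} ∩ {q | q.2.2 = s}))
    -- (iii) the empty set is S-admissible for the effect of X on W :
    -- P(w | do(x), s) = P(w | do(x))
    (hWadm : ∀ x w s,
      pcond (μx x) {p | p.2.2.1 = w} {p | p.2.2.2 = s} = μx x {p | p.2.2.1 = w}) :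
    ∀ x y,
      pcond (μx x) {p | p.1 = y} {p | p.2.2.2 = s'}
        = ∑ z : 𝒵, pcond (μx x) {p | p.1 = y} {p | p.2.1 = z}
            * ∑ w : 𝒲, μx x {p | p.2.2.1 = w}
                * pcond μ {q | q.1 = z} ({q | q.2.1 = w} ∩ {q | q.2.2 = s'}) := by
  intro x y
  haveI := hprobx x
  set ν := μx x with hν
  have hStop : ν {p | p.2.2.2 = s'} ≠ ⊤ := measure_ne_top _ _
  have hS0 : ν {p | p.2.2.2 = s'} ≠ 0 := (hposS x s').ne'
  have mY : MeasurableSet {p : 𝒴 × 𝒵 × 𝒲 × 𝒮 | p.1 = y} :=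
    measurable_fst (measurableSet_singleton y)
  have mZ : ∀ z : 𝒵, MeasurableSet {p : 𝒴 × 𝒵 × 𝒲 × 𝒮 | p.2.1 = z} :=
    fun z => (measurable_fst.comp measurable_snd) (measurableSet_singleton z)
  have mW : ∀ w : 𝒲, MeasurableSet {p : 𝒴 × 𝒵 × 𝒲 × 𝒮 | p.2.2.1 = w} :=
    fun w => (measurable_fst.comp (measurable_snd.comp measurable_snd))
      (measurableSet_singleton w)
  have mS : MeasurableSet {p : 𝒴 × 𝒵 × 𝒲 × 𝒮 | p.2.2.2 = s'} :=
    (measurable_snd.comp (measurable_snd.comp measurable_snd))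
      (measurableSet_singleton s')
  -- Step A: the inner sum
  have stepA : ∀ z : 𝒵,
      (∑ w : 𝒲, ν {p | p.2.2.1 = w}
        * pcond μ {q | q.1 = z} ({q | q.2.1 = w} ∩ {q | q.2.2 = s'}))
      = ν ({p | p.2.1 = z} ∩ {p | p.2.2.2 = s'}) / ν {p | p.2.2.2 = s'} := by
    intro z
    have hterm : ∀ w : 𝒲,
        ν {p | p.2.2.1 = w}
          * pcond μ {q | q.1 = z} ({q | q.2.1 = w} ∩ {q | q.2.2 = s'})
        = ν ({p | p.2.1 = z} ∩ ({p | p.2.2.1 = w} ∩ {p | p.2.2.2 = s'}))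
            / ν {p | p.2.2.2 = s'} := by
      intro w
      rw [← hrule3 x z w s', ← hWadm x w s']
      unfold pcond
      exact ennreal_cancel (hposWSx x w s').ne' (measure_ne_top _ _)
    rw [Finset.sum_congr rfl fun w _ => hterm w]
    simp only [div_eq_mul_inv, ← Finset.sum_mul]
    congr 1
    have := measure_partition ν ({p | p.2.1 = z} ∩ {p | p.2.2.2 = s'})
      (fun p => p.2.2.1) (fun w => ((mZ z).inter mS).inter (mW w))
    rw [this]
    refine Finset.sum_congr rfl fun w _ => ?_
    congr 1
    ext p
    simp only [Set.mem_inter_iff, Set.mem_setOf_eq, Set.mem_preimage,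
      Set.mem_singleton_iff]
    tauto
  -- rewrite the RHS using stepA
  rw [Finset.sum_congr rfl fun z _ => by rw [stepA z]]
  -- Step B
  have stepB : ∀ z : 𝒵,
      pcond ν {p | p.1 = y} {p | p.2.1 = z}
        * (ν ({p | p.2.1 = z} ∩ {p | p.2.2.2 = s'}) / ν {p | p.2.2.2 = s'})
      = ν ({p | p.1 = y} ∩ ({p | p.2.1 = z} ∩ {p | p.2.2.2 = s'}))
          / ν {p | p.2.2.2 = s'} := by
    intro z
    rcases eq_or_lt_of_le (zero_le : (0 : ENNReal) ≤ ν ({p | p.2.1 = z} ∩ {p | p.2.2.2 = s'}))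
      with h0 | hpos
    · have h1 : ν ({p | p.1 = y} ∩ ({p | p.2.1 = z} ∩ {p | p.2.2.2 = s'})) = 0 :=
        measure_mono_null Set.inter_subset_right h0.symm
      rw [h1, ← h0]; simp
    · rw [← hadm x y z s' hpos]
      unfold pcond
      rw [mul_comm]
      exact ennreal_cancel hpos.ne' (measure_ne_top _ _)
  rw [Finset.sum_congr rfl fun z _ => stepB z]
  simp only [div_eq_mul_inv, ← Finset.sum_mul]
  unfold pcond
  congr 1
  have := measure_partition ν ({p | p.1 = y} ∩ {p | p.2.2.2 = s'})
    (fun p => p.2.1) (fun z => (mY.inter mS).inter (mZ z))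
  rw [this]
  refine Finset.sum_congr rfl fun z _ => ?_
  congr 1
  ext p
  simp only [Set.mem_inter_iff, Set.mem_setOf_eq, Set.mem_preimage,
    Set.mem_singleton_iff]
  tauto
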